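/- Let 2 ∈ R*, n ≥ 3m, and H a subgroup of GL_N(R) containing Λ^m E_n(R). If |I ∩ J| = |K ∩ L| for distinct pairs (I,J), (K,L) of m-element subsets, then the sets A_{I,J} = {ξ : t_{I,J}(ξ) ∈ H} and A_{K,L} coincide. -/

import Mathlib

open Matrix

/-- Index type: `m`-element subsets of `{1,…,n}`. -/
abbrev ExtIdx (n m : ℕ) := {s : Finset (Fin n) // s.card = m}

/-- The `m`-th exterior power of a matrix: the matrix of its `m × m` minors,
rows and columns indexed by `m`-element subsets in increasing order. -/
def extPow (R : Type) [CommRing R] (n m : ℕ) (g : Matrix (Fin n) (Fin n) R) :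
    Matrix (ExtIdx n m) (ExtIdx n m) R :=
  Matrix.of fun I J =>
    (Matrix.of fun a b : Fin m =>
      g (I.1.orderIsoOfFin I.2 a) (J.1.orderIsoOfFin J.2 b)).det

/-- An elementary transvection `e + ξ e_{i,j}` as an element of `GL`. -/
def tGL (R : Type) [CommRing R] {ι : Type} [Fintype ι] [DecidableEq ι]
    (i j : ι) (hij : i ≠ j) (ξ : R) : GL ι R where
  val := Matrix.transvection i j ξ
  inv := Matrix.transvection i j (-ξ)
  val_inv := by
    rw [Matrix.transvection_mul_transvection_same i j hij]; simp
  inv_val := by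
    rw [Matrix.transvection_mul_transvection_same i j hij]; simp

/-- The elementary group `E(R)` generated by all elementary transvections. -/
def elemGL (R : Type) [CommRing R] (ι : Type) [Fintype ι] [DecidableEq ι] :
    Subgroup (GL ι R) :=
  Subgroup.closure {x | ∃ i j, ∃ hij : i ≠ j, ∃ ξ : R, x = tGL R i j hij ξ}

/-- `E(A)`: the subgroup generated by elementary transvections with parameter in `A`. -/
def elemGLIdeal (R : Type) [CommRing R] (ι : Type) [Fintype ι] [DecidableEq ι]
    (A : Ideal R) : Subgroup (GL ι R) :=
  Subgroup.closure {x | ∃ i j, ∃ hij : i ≠ j, ∃ ξ : R, ξ ∈ A ∧ x = tGL R i j hij ξ}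

/-- The smallest subgroup containing `K` and normalized by `H`:
the normal closure of `K` under conjugation by `H`. -/
def conjClosureBy {G : Type*} [Group G] (K H : Subgroup G) : Subgroup G :=
  Subgroup.closure {x | ∃ h ∈ H, ∃ y ∈ K, x = h * y * h⁻¹}

/-- The relative elementary subgroup `E(R, A) = E(A)^{E(R)}`. -/
def relElem (R : Type) [CommRing R] (ι : Type) [Fintype ι] [DecidableEq ι]
    (A : Ideal R) : Subgroup (GL ι R) :=
  conjClosureBy (elemGLIdeal R ι A) (elemGL R ι)

/-- `Λ^m E_n(R)`: the exterior power of the elementary group, the subgroup of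
`GL_N(R)` generated by the exterior powers of elementary transvections. -/
def extElem (R : Type) [CommRing R] (n m : ℕ) : Subgroup (GL (ExtIdx n m) R) :=
  Subgroup.closure {x | ∃ i j, ∃ _ : i ≠ j, ∃ ξ : R,
    (x : Matrix (ExtIdx n m) (ExtIdx n m) R) = extPow R n m (Matrix.transvection i j ξ)}

/-- `sign(L, i)`: the sign of the permutation sorting the list `(L, i)`. -/
def signLI (R : Type) [CommRing R] {n : ℕ} (L : Finset (Fin n)) (i : Fin n) : R :=
  (-1 : R) ^ (L.filter fun l => i < l).card

/-- Replacing the element `i ∈ I` by `j ∉ I` in an `m`-element subset. -/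
def swapIdx {n m : ℕ} (I : ExtIdx n m) (i j : Fin n) (hi : i ∈ I.1) (hj : j ∉ I.1) :
    ExtIdx n m :=
  ⟨insert j (I.1.erase i), by
    have h1 : j ∉ I.1.erase i := fun h => hj (Finset.mem_of_mem_erase h)
    have h2 : 1 ≤ m := I.2 ▸ Finset.card_pos.mpr ⟨i, hi⟩
    rw [Finset.card_insert_of_notMem h1, Finset.card_erase_of_mem hi, I.2]
    omega⟩

/-- Reduction of `GL` along a ring homomorphism. -/
def glMap {ι : Type} [Fintype ι] [DecidableEq ι] {S S' : Type} [CommRing S] [CommRing S']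
    (f : S →+* S') : GL ι S →* GL ι S' :=
  Units.map (RingHom.mapMatrix f).toMonoidHom


/-! ### Auxiliary development -/

section Aux

variable {R : Type} [CommRing R] {n m : ℕ}

/-- Ordered enumeration of an `m`-element subset. -/
def enumIdx (S : ExtIdx n m) (a : Fin m) : Fin n := S.1.orderIsoOfFin S.2 a

lemma enumIdx_mem (S : ExtIdx n m) (a : Fin m) : enumIdx S a ∈ S.1 :=
  (S.1.orderIsoOfFin S.2 a).2

lemma enumIdx_inj (S : ExtIdx n m) : Function.Injective (enumIdx S) :=
  fun a b h => (S.1.orderIsoOfFin S.2).injective (Subtype.ext h)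

lemma image_enumIdx (S : ExtIdx n m) : Finset.image (enumIdx S) Finset.univ = S.1 := by
  apply Finset.eq_of_subset_of_card_le
  · intro x hx
    simp only [Finset.mem_image] at hx
    obtain ⟨a, _, rfl⟩ := hx
    exact enumIdx_mem S a
  · rw [Finset.card_image_of_injective _ (enumIdx_inj S), Finset.card_univ, Fintype.card_fin,
      S.2]

lemma extPow_apply (g : Matrix (Fin n) (Fin n) R) (I J : ExtIdx n m) :
    extPow R n m g I J =
      (Matrix.of fun a b : Fin m => g (enumIdx I a) (enumIdx J b)).det := rfl

/-- Cauchy–Binet. -/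
theorem det_mul_rect (A : Matrix (Fin m) (Fin n) R) (B : Matrix (Fin n) (Fin m) R) :
    (A * B).det =
      ∑ S : ExtIdx n m, (A.submatrix id (enumIdx S)).det * (B.submatrix (enumIdx S) id).det := by
  classical
  have h1 : (A * B).det = ∑ p : Fin m → Fin n, (∏ i, B (p i) i) * (A.submatrix id p).det := by
    simp only [Matrix.det_apply', Matrix.mul_apply, Finset.prod_univ_sum, Finset.mul_sum,
      Fintype.piFinset_univ]
    rw [Finset.sum_comm]
    refine Finset.sum_congr rfl fun p _ => ?_
    refine Finset.sum_congr rfl fun σ _ => ?_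
    simp only [Matrix.submatrix_apply, id_eq, Finset.prod_mul_distrib]
    ring
  rw [h1, ← Finset.sum_filter_add_sum_filter_not Finset.univ (fun p => Function.Injective p)]
  have h2 : ∑ p ∈ Finset.univ.filter (fun p : Fin m → Fin n => ¬ Function.Injective p),
      (∏ i, B (p i) i) * (A.submatrix id p).det = 0 := by
    apply Finset.sum_eq_zero
    intro p hp
    rw [Finset.mem_filter] at hp
    simp only [Finset.mem_univ, true_and, Function.Injective] at hp
    push_neg at hp
    obtain ⟨i, j, hij, hne⟩ := hp
    rw [Matrix.det_zero_of_column_eq hne (fun k => by simp [hij]), mul_zero]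
  rw [h2, add_zero]
  have h3 : ∑ p ∈ Finset.univ.filter (fun p : Fin m → Fin n => Function.Injective p),
      (∏ i, B (p i) i) * (A.submatrix id p).det
      = ∑ x : ExtIdx n m × Equiv.Perm (Fin m),
          (∏ i, B (enumIdx x.1 (x.2 i)) i) *
            (A.submatrix id fun i => enumIdx x.1 (x.2 i)).det := by
    symm
    have himg : ∀ (S : ExtIdx n m) (τ : Equiv.Perm (Fin m)),
        Finset.image (fun i => enumIdx S (τ i)) Finset.univ = S.1 := by
      intro S τ
      have hc : (fun i => enumIdx S (τ i)) = enumIdx S ∘ τ := rfl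
      rw [hc, ← Finset.image_image, Finset.image_univ_equiv, image_enumIdx]
    apply Finset.sum_bij
      (i := fun (x : ExtIdx n m × Equiv.Perm (Fin m)) _ => fun i => enumIdx x.1 (x.2 i))
    · intro x _
      simp only [Finset.mem_filter, Finset.mem_univ, true_and]
      exact (enumIdx_inj x.1).comp x.2.injective
    · intro x _ y _ h
      have hS : x.1 = y.1 := by
        apply Subtype.ext
        rw [← himg x.1 x.2, ← himg y.1 y.2, h]
      have hτ : x.2 = y.2 := by
        apply Equiv.ext
        intro i
        apply enumIdx_inj y.1
        have hh := congrFun h i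
        rw [hS] at hh
        exact hh
      exact Prod.ext hS hτ
    · intro p hp
      simp only [Finset.mem_filter, Finset.mem_univ, true_and] at hp
      have hcard : (Finset.image p Finset.univ).card = m := by
        rw [Finset.card_image_of_injective _ hp, Finset.card_univ, Fintype.card_fin]
      have hmem : ∀ i, p i ∈ (Finset.image p Finset.univ) :=
        fun i => Finset.mem_image_of_mem p (Finset.mem_univ i)
      have hfinj : Function.Injective (fun i =>
          ((Finset.image p Finset.univ).orderIsoOfFin hcard).symm ⟨p i, hmem i⟩) := by
        intro i j hij
        apply hp
        have h1 := congrArg ((Finset.image p Finset.univ).orderIsoOfFin hcard) hij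
        simp only [OrderIso.apply_symm_apply] at h1
        exact congrArg Subtype.val h1
      refine ⟨(⟨Finset.image p Finset.univ, hcard⟩,
        Equiv.ofBijective _ (Finite.injective_iff_bijective.mp hfinj)), Finset.mem_univ _, ?_⟩
      funext i
      show enumIdx _ _ = p i
      simp only [enumIdx, Equiv.ofBijective_apply, OrderIso.apply_symm_apply]
    · intro x _
      rfl
  rw [h3, Fintype.sum_prod_type]
  refine Finset.sum_congr rfl fun S _ => ?_
  have hperm : ∀ τ : Equiv.Perm (Fin m),
      (A.submatrix id fun i => enumIdx S (τ i)).det =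
        ((Equiv.Perm.sign τ : ℤ) : R) * (A.submatrix id (enumIdx S)).det := by
    intro τ
    have hc : A.submatrix id (fun i => enumIdx S (τ i)) =
        (A.submatrix id (enumIdx S)).submatrix id τ := rfl
    rw [hc, Matrix.det_permute']
  have hcong : ∀ τ ∈ (Finset.univ : Finset (Equiv.Perm (Fin m))),
      (∏ i, B (enumIdx S (τ i)) i) * (A.submatrix id fun i => enumIdx S (τ i)).det =
        (((Equiv.Perm.sign τ : ℤ) : R) * ∏ i, (B.submatrix (enumIdx S) id) (τ i) i) *
          (A.submatrix id (enumIdx S)).det := by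
    intro τ _
    rw [hperm]
    simp only [Matrix.submatrix_apply, id_eq]
    ring
  rw [Finset.sum_congr rfl hcong, ← Finset.sum_mul, ← Matrix.det_apply', mul_comm]

theorem extPow_mul (g h : Matrix (Fin n) (Fin n) R) :
    extPow R n m (g * h) = extPow R n m g * extPow R n m h := by
  ext I J
  rw [Matrix.mul_apply, extPow_apply]
  have hmat : (Matrix.of fun a b : Fin m => (g * h) (enumIdx I a) (enumIdx J b)) =
      (Matrix.of fun (a : Fin m) (k : Fin n) => g (enumIdx I a) k) *
        (Matrix.of fun (k : Fin n) (b : Fin m) => h k (enumIdx J b)) := by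
    ext a b
    simp [Matrix.mul_apply]
  rw [hmat, det_mul_rect]
  refine Finset.sum_congr rfl fun S _ => ?_
  congr 1

theorem extPow_one : extPow R n m (1 : Matrix (Fin n) (Fin n) R) = 1 := by
  ext I J
  by_cases h : I = J
  · subst h
    rw [extPow_apply]
    have hm : (Matrix.of fun a b : Fin m =>
        (1 : Matrix (Fin n) (Fin n) R) (enumIdx I a) (enumIdx I b))
        = (1 : Matrix (Fin m) (Fin m) R) := by
      ext a b
      simp only [Matrix.of_apply, Matrix.one_apply, (enumIdx_inj I).eq_iff]
    rw [hm, Matrix.det_one, Matrix.one_apply_eq]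
  · rw [extPow_apply, Matrix.one_apply_ne h]
    obtain ⟨x, hxJ, hxI⟩ : ∃ x ∈ J.1, x ∉ I.1 := by
      by_contra hc
      push_neg at hc
      exact h (Subtype.ext (Finset.eq_of_subset_of_card_le hc (by rw [I.2, J.2])).symm)
    apply Matrix.det_eq_zero_of_column_eq_zero ((J.1.orderIsoOfFin J.2).symm ⟨x, hxJ⟩)
    intro a
    have hx : enumIdx J ((J.1.orderIsoOfFin J.2).symm ⟨x, hxJ⟩) = x := by
      simp [enumIdx]
    simp only [Matrix.of_apply]
    show (1 : Matrix (Fin n) (Fin n) R) (enumIdx I a) (enumIdx J _) = 0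
    rw [hx]
    exact Matrix.one_apply_ne (fun hax => hxI (hax ▸ enumIdx_mem I a))

/-- The exterior power as a map of `GL`s. -/
def extPowGL (g : GL (Fin n) R) : GL (ExtIdx n m) R where
  val := extPow R n m g.val
  inv := extPow R n m g.inv
  val_inv := by rw [← extPow_mul, g.val_inv, extPow_one]
  inv_val := by rw [← extPow_mul, g.inv_val, extPow_one]

/-- The exterior power as a group homomorphism `GL_n(R) → GL_N(R)`. -/
def extPowHom : GL (Fin n) R →* GL (ExtIdx n m) R where
  toFun := extPowGL
  map_one' := Units.ext extPow_one
  map_mul' g h := Units.ext (extPow_mul g.val h.val)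

lemma extPowHom_mem_extElem (M : GL (Fin n) R) (hM : M ∈ elemGL R (Fin n)) :
    (extPowHom M : GL (ExtIdx n m) R) ∈ extElem R n m := by
  have hmap : Subgroup.map (extPowHom (R := R) (n := n) (m := m)) (elemGL R (Fin n)) ≤
      extElem R n m := by
    rw [elemGL, MonoidHom.map_closure]
    apply Subgroup.closure_mono
    rintro x ⟨y, ⟨i, j, hij, ξ, rfl⟩, rfl⟩
    exact ⟨i, j, hij, ξ, rfl⟩
  exact hmap ⟨M, hM, rfl⟩

/-- A signed monomial matrix. -/
def mono (σ : Equiv.Perm (Fin n)) (d : Fin n → R) : Matrix (Fin n) (Fin n) R :=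
  Matrix.of fun i j => if i = σ j then d j else 0

lemma mono_mul_mono (σ τ : Equiv.Perm (Fin n)) (d e : Fin n → R) :
    (mono σ d : Matrix (Fin n) (Fin n) R) * mono τ e
      = mono (σ * τ) (fun j => d (τ j) * e j) := by
  ext i j
  rw [Matrix.mul_apply, Finset.sum_eq_single (τ j)]
  · simp only [mono, Matrix.of_apply, Equiv.Perm.mul_apply, if_pos rfl]
    by_cases h : i = σ (τ j) <;> simp [h]
  · intro k _ hk
    simp [mono, hk]
  · intro h
    exact absurd (Finset.mem_univ _) h

lemma mono_one_one : (mono (1 : Equiv.Perm (Fin n)) (fun _ => (1 : R))) = 1 := by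
  ext i j
  simp [mono, Matrix.one_apply]
  congr

lemma mono_mul_mono_inv (σ : Equiv.Perm (Fin n)) (d : Fin n → R)
    (hd : ∀ j, d j = 1 ∨ d j = -1) :
    (mono σ d : Matrix (Fin n) (Fin n) R) * mono σ⁻¹ (fun j => d (σ⁻¹ j)) = 1 := by
  rw [mono_mul_mono]
  have hh : (fun j : Fin n => d (σ⁻¹ j) * d (σ⁻¹ j)) = fun _ => (1 : R) := by
    funext j
    rcases hd (σ⁻¹ j) with h | h <;> rw [h] <;> ring
  rw [mul_inv_cancel, hh, mono_one_one]

lemma swap_step (x y : Fin n) (hxy : x ≠ y) (f : Equiv.Perm (Fin n)) (d : Fin n → R) :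
    Matrix.transvection x y 1 *
      (Matrix.transvection y x (-1) * (Matrix.transvection x y 1 * mono f d)) =
    mono (Equiv.swap x y * f) (fun j => if f j = x then -d j else d j) := by
  ext i j
  rcases eq_or_ne i x with hix | hix
  · rw [hix]
    rw [Matrix.transvection_mul_apply_same, Matrix.transvection_mul_apply_of_ne _ _ _ _ hxy,
      Matrix.transvection_mul_apply_same, Matrix.transvection_mul_apply_same,
      Matrix.transvection_mul_apply_of_ne _ _ _ _ hxy.symm, Matrix.transvection_mul_apply_same]
    simp only [mono, Matrix.of_apply, Equiv.Perm.mul_apply]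
    by_cases h1 : f j = x
    · simp only [h1, Equiv.swap_apply_left]
      simp [hxy, hxy.symm]
    · by_cases h2 : f j = y
      · simp only [h2, Equiv.swap_apply_right]
        simp [hxy, hxy.symm]
        try ring
      · simp only [Equiv.swap_apply_of_ne_of_ne h1 h2]
        simp [Ne.symm h1, Ne.symm h2, hxy]
        try ring
  · rcases eq_or_ne i y with hiy | hiy
    · rw [hiy]
      rw [Matrix.transvection_mul_apply_of_ne _ _ _ _ hxy.symm,
        Matrix.transvection_mul_apply_same, Matrix.transvection_mul_apply_of_ne _ _ _ _ hxy.symm,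
        Matrix.transvection_mul_apply_same]
      simp only [mono, Matrix.of_apply, Equiv.Perm.mul_apply]
      by_cases h1 : f j = x
      · simp only [h1, Equiv.swap_apply_left]
        simp [hxy, hxy.symm]
        try ring
      · by_cases h2 : f j = y
        · simp only [h2, Equiv.swap_apply_right]
          simp [hxy, hxy.symm, h1]
          try ring
        · simp only [Equiv.swap_apply_of_ne_of_ne h1 h2]
          simp [Ne.symm h1, Ne.symm h2]
          try ring
    · rw [Matrix.transvection_mul_apply_of_ne _ _ _ _ hix,
        Matrix.transvection_mul_apply_of_ne _ _ _ _ hiy,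
        Matrix.transvection_mul_apply_of_ne _ _ _ _ hix]
      simp only [mono, Matrix.of_apply, Equiv.Perm.mul_apply]
      by_cases h1 : f j = x
      · simp only [h1, Equiv.swap_apply_left]
        simp [hix, hiy, fun hc : i = x => hix hc]
      · by_cases h2 : f j = y
        · simp only [h2, Equiv.swap_apply_right]
          simp [hix, hiy]
        · simp only [Equiv.swap_apply_of_ne_of_ne h1 h2]
          simp [h1]

lemma exists_mono (σ : Equiv.Perm (Fin n)) :
    ∃ M : GL (Fin n) R, M ∈ elemGL R (Fin n) ∧ ∃ d : Fin n → R,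
      (∀ j, d j = 1 ∨ d j = -1) ∧ (M : Matrix (Fin n) (Fin n) R) = mono σ d := by
  induction' σ using Equiv.Perm.swap_induction_on with f x y hxy IH
  · refine ⟨1, Subgroup.one_mem _, fun _ => 1, fun _ => Or.inl rfl, ?_⟩
    rw [Units.val_one, mono_one_one]
  · obtain ⟨M, hM, d, hd, hMv⟩ := IH
    refine ⟨tGL R x y hxy 1 * (tGL R y x hxy.symm (-1) * (tGL R x y hxy 1 * M)), ?_,
      fun j => if f j = x then -d j else d j, ?_, ?_⟩
    · have g1 : tGL R x y hxy (1 : R) ∈ elemGL R (Fin n) :=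
        Subgroup.subset_closure ⟨x, y, hxy, 1, rfl⟩
      have g2 : tGL R y x hxy.symm (-1 : R) ∈ elemGL R (Fin n) :=
        Subgroup.subset_closure ⟨y, x, hxy.symm, -1, rfl⟩
      exact Subgroup.mul_mem _ g1 (Subgroup.mul_mem _ g2 (Subgroup.mul_mem _ g1 hM))
    · intro j
      by_cases hc : f j = x <;> rcases hd j with h | h <;> simp [hc, h]
    · have hv : ((tGL R x y hxy 1 * (tGL R y x hxy.symm (-1) * (tGL R x y hxy 1 * M)) :
          GL (Fin n) R) : Matrix (Fin n) (Fin n) R)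
          = Matrix.transvection x y 1 *
            (Matrix.transvection y x (-1) *
              (Matrix.transvection x y 1 * (M : Matrix (Fin n) (Fin n) R))) := by
        rw [Units.val_mul, Units.val_mul, Units.val_mul]
        rfl
      rw [hv, hMv, swap_step x y hxy f d]

lemma perm_inv_apply_self (σ : Equiv.Perm (Fin n)) (z : Fin n) : σ⁻¹ (σ z) = z :=
  Equiv.Perm.inv_eq_iff_eq.mpr rfl

lemma perm_apply_inv_self (σ : Equiv.Perm (Fin n)) (z : Fin n) : σ (σ⁻¹ z) = z :=
  (Equiv.eq_symm_apply σ).mp rfl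

lemma sign_mul_pm {a b : R} (ha : a = 1 ∨ a = -1) (hb : b = 1 ∨ b = -1) :
    a * b = 1 ∨ a * b = -1 := by
  rcases ha with rfl | rfl <;> rcases hb with rfl | rfl <;> simp

lemma extPow_mono_ne (σ : Equiv.Perm (Fin n)) (d : Fin n → R) (A B : ExtIdx n m)
    (h : A.1 ≠ B.1.image σ) : extPow R n m (mono σ d) A B = 0 := by
  obtain ⟨x, hxB, hxA⟩ : ∃ x ∈ B.1, σ x ∉ A.1 := by
    by_contra hc
    push_neg at hc
    apply h
    have hsub : B.1.image σ ⊆ A.1 := by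
      intro y hy
      simp only [Finset.mem_image] at hy
      obtain ⟨z, hz, rfl⟩ := hy
      exact hc z hz
    have hcard : (B.1.image σ).card = m := by
      rw [Finset.card_image_of_injective _ σ.injective, B.2]
    exact (Finset.eq_of_subset_of_card_le hsub (by rw [hcard, A.2])).symm
  rw [extPow_apply]
  apply Matrix.det_eq_zero_of_column_eq_zero ((B.1.orderIsoOfFin B.2).symm ⟨x, hxB⟩)
  intro a
  have hx : enumIdx B ((B.1.orderIsoOfFin B.2).symm ⟨x, hxB⟩) = x := by
    simp [enumIdx]
  simp only [Matrix.of_apply]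
  show mono σ d (enumIdx A a) (enumIdx B _) = 0
  rw [hx]
  simp only [mono, Matrix.of_apply]
  rw [if_neg]
  intro heq
  exact hxA (heq ▸ enumIdx_mem A a)

lemma extPow_mono_eq (σ : Equiv.Perm (Fin n)) (d : Fin n → R)
    (hd : ∀ j, d j = 1 ∨ d j = -1) (A B : ExtIdx n m) (h : A.1 = B.1.image σ) :
    ∃ c : R, (c = 1 ∨ c = -1) ∧ extPow R n m (mono σ d) A B = c := by
  have hmem : ∀ b : Fin m, σ (enumIdx B b) ∈ A.1 := fun b =>
    h ▸ Finset.mem_image_of_mem σ (enumIdx_mem B b)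
  have hπa : ∀ b, enumIdx A ((A.1.orderIsoOfFin A.2).symm ⟨σ (enumIdx B b), hmem b⟩)
      = σ (enumIdx B b) := fun b => by
    simp only [enumIdx, OrderIso.apply_symm_apply]
  have hπinj : Function.Injective
      (fun b => (A.1.orderIsoOfFin A.2).symm ⟨σ (enumIdx B b), hmem b⟩) := by
    intro b b' hbb
    have h2 := congrArg (enumIdx A) hbb
    simp only [hπa] at h2
    exact enumIdx_inj B (σ.injective h2)
  set πe : Equiv.Perm (Fin m) :=
    Equiv.ofBijective _ (Finite.injective_iff_bijective.mp hπinj) with hπe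
  have hπea : ∀ b, enumIdx A (πe b) = σ (enumIdx B b) := hπa
  have hmat : (Matrix.of fun a b : Fin m => mono σ d (enumIdx A a) (enumIdx B b)) =
      Matrix.of fun a b : Fin m =>
        d (enumIdx B b) * (πe⁻¹.permMatrix R) a b := by
    ext a b
    simp only [Matrix.of_apply, mono, Equiv.Perm.permMatrix, PEquiv.toMatrix_apply,
      Equiv.toPEquiv_apply, Option.mem_def, Option.some.injEq]
    have hcond : enumIdx A a = σ (enumIdx B b) ↔ πe⁻¹ a = b := by
      rw [← hπea]
      constructor
      · intro hc
        have hce : a = πe b := enumIdx_inj A hc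
        rw [hce, perm_inv_apply_self]
      · rintro rfl
        rw [perm_apply_inv_self]
    by_cases hb : enumIdx A a = σ (enumIdx B b)
    · rw [if_pos hb, if_pos (hcond.mp hb), mul_one]
    · rw [if_neg hb, if_neg (fun hc => hb (hcond.mpr hc)), mul_zero]
  refine ⟨(∏ b, d (enumIdx B b)) * ((Equiv.Perm.sign πe⁻¹ : ℤ) : R), ?_, ?_⟩
  · apply sign_mul_pm
    · refine Finset.prod_induction _ (fun r => r = 1 ∨ r = -1)
        (fun a b ha hb => sign_mul_pm ha hb) (Or.inl rfl) ?_
      intro b _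
      exact hd (enumIdx B b)
    · rcases Int.units_eq_one_or (Equiv.Perm.sign πe⁻¹) with hs | hs <;> rw [hs] <;> simp
  · rw [extPow_apply, hmat, Matrix.det_mul_row, Matrix.det_permutation]

lemma image_image_inv (σ : Equiv.Perm (Fin n)) (s : Finset (Fin n)) :
    (s.image ⇑σ).image ⇑(σ⁻¹) = s := by
  rw [Finset.image_image]
  have hc : (⇑σ⁻¹ ∘ ⇑σ) = id := funext fun z => perm_inv_apply_self σ z
  rw [hc, Finset.image_id]

lemma tGL_inv_eq {ι : Type} [Fintype ι] [DecidableEq ι] (i j : ι) (hij : i ≠ j) (ξ : R) :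
    (tGL R i j hij ξ)⁻¹ = tGL R i j hij (-ξ) :=
  Units.ext rfl

lemma conj_tGL (M : GL (Fin n) R) (σ : Equiv.Perm (Fin n)) (d : Fin n → R)
    (hd : ∀ j, d j = 1 ∨ d j = -1) (hMv : (M : Matrix (Fin n) (Fin n) R) = mono σ d)
    (I J K L : ExtIdx n m) (hIJ : I ≠ J) (hKL : K ≠ L)
    (hK : K.1 = I.1.image σ) (hL : L.1 = J.1.image σ) (ξ : R) :
    ∃ c : R, (c = 1 ∨ c = -1) ∧
      (extPowHom M : GL (ExtIdx n m) R) * tGL R I J hIJ ξ * (extPowHom M)⁻¹ =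
        tGL R K L hKL (c * ξ) := by
  have hd' : ∀ j, d (σ⁻¹ j) = 1 ∨ d (σ⁻¹ j) = -1 := fun j => hd (σ⁻¹ j)
  have hMinv : ((M⁻¹ : GL (Fin n) R) : Matrix (Fin n) (Fin n) R)
      = mono σ⁻¹ (fun j => d (σ⁻¹ j)) := by
    have hone : (M : Matrix (Fin n) (Fin n) R) * mono σ⁻¹ (fun j => d (σ⁻¹ j)) = 1 := by
      rw [hMv]
      exact mono_mul_mono_inv σ d hd
    exact Units.inv_eq_of_mul_eq_one_right hone
  have hJL : J.1 = L.1.image ⇑(σ⁻¹) := by rw [hL, image_image_inv]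
  obtain ⟨α, hα, hαv⟩ := extPow_mono_eq σ d hd K I hK
  obtain ⟨β, hβ, hβv⟩ := extPow_mono_eq σ⁻¹ (fun j => d (σ⁻¹ j)) hd' J L hJL
  refine ⟨α * β, sign_mul_pm hα hβ, ?_⟩
  apply Units.ext
  have hval : (((extPowHom M : GL (ExtIdx n m) R) * tGL R I J hIJ ξ *
      (extPowHom M)⁻¹ : GL (ExtIdx n m) R) : Matrix (ExtIdx n m) (ExtIdx n m) R) =
      extPow R n m (mono σ d) * Matrix.transvection I J ξ *
        extPow R n m (mono σ⁻¹ (fun j => d (σ⁻¹ j))) := by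
    rw [Units.val_mul, Units.val_mul]
    congr 1
    · congr 1
      show extPow R n m (M : Matrix (Fin n) (Fin n) R) = _
      rw [hMv]
    · show extPow R n m ((M⁻¹ : GL (Fin n) R) : Matrix (Fin n) (Fin n) R) = _
      rw [hMinv]
  rw [hval]
  show _ = Matrix.transvection K L (α * β * ξ)
  have hPQ : extPow R n m (mono σ d) *
      extPow R n m (mono σ⁻¹ (fun j => d (σ⁻¹ j))) = 1 := by
    rw [← extPow_mul, mono_mul_mono_inv σ d hd, extPow_one]
  simp only [Matrix.transvection]
  have hexp : extPow R n m (mono σ d) * (1 + Matrix.single I J ξ) *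
      extPow R n m (mono σ⁻¹ (fun j => d (σ⁻¹ j))) =
      extPow R n m (mono σ d) * extPow R n m (mono σ⁻¹ (fun j => d (σ⁻¹ j))) +
        extPow R n m (mono σ d) * Matrix.single I J ξ *
          extPow R n m (mono σ⁻¹ (fun j => d (σ⁻¹ j))) := by
    noncomm_ring
  rw [hexp, hPQ, add_right_inj]
  ext A B
  rw [Matrix.mul_assoc, Matrix.mul_apply, Finset.sum_eq_single I]
  · rw [Matrix.single_mul_apply_same]
    by_cases hA : A = K
    · by_cases hB : B = L
      · subst hA; subst hB
        rw [hαv, hβv]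
        simp only [Matrix.single, Matrix.of_apply, and_self, if_true]
        ring
      · have hz : extPow R n m (mono σ⁻¹ (fun j => d (σ⁻¹ j))) J B = 0 := by
          apply extPow_mono_ne
          intro heq
          apply hB
          apply Subtype.ext
          rw [hL, heq, Finset.image_image]
          have hc : (⇑σ ∘ ⇑σ⁻¹) = id := funext fun z => perm_apply_inv_self σ z
          rw [hc, Finset.image_id]
        rw [hz, mul_zero, mul_zero]
        simp only [Matrix.single, Matrix.of_apply]
        exact (if_neg fun hc => hB hc.2.symm).symm
    · have hz : extPow R n m (mono σ d) A I = 0 := by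
        apply extPow_mono_ne
        intro heq
        exact hA (Subtype.ext (heq.trans hK.symm))
      rw [hz, zero_mul]
      simp only [Matrix.single, Matrix.of_apply]
      exact (if_neg fun hc => hA hc.1.symm).symm
  · intro C _ hC
    rw [Matrix.single_mul_apply_of_ne (h := hC), mul_zero]
  · intro hmem
    exact absurd (Finset.mem_univ _) hmem

lemma exists_perm_of_cards {n : ℕ} (I J K L : Finset (Fin n))
    (hIK : I.card = K.card) (hJL : J.card = L.card)
    (hint : (I ∩ J).card = (K ∩ L).card) :
    ∃ σ : Equiv.Perm (Fin n), I.image σ = K ∧ J.image σ = L := by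
  classical
  have c2 : (I \ J).card = (K \ L).card := by
    have u1 := Finset.card_inter_add_card_sdiff I J
    have u2 := Finset.card_inter_add_card_sdiff K L
    omega
  have c3 : (J \ I).card = (L \ K).card := by
    have u1 := Finset.card_inter_add_card_sdiff J I
    have u2 := Finset.card_inter_add_card_sdiff L K
    rw [Finset.inter_comm] at u1
    rw [Finset.inter_comm] at u2
    omega
  have c4 : ((I ∪ J)ᶜ).card = ((K ∪ L)ᶜ).card := by
    have u1 := Finset.card_union_add_card_inter I J
    have u2 := Finset.card_union_add_card_inter K L
    rw [Finset.card_compl, Finset.card_compl]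
    omega
  let e1 : ↥(I ∩ J) ≃ ↥(K ∩ L) := Finset.equivOfCardEq hint
  let e2 : ↥(I \ J) ≃ ↥(K \ L) := Finset.equivOfCardEq c2
  let e3 : ↥(J \ I) ≃ ↥(L \ K) := Finset.equivOfCardEq c3
  let e4 : ↥((I ∪ J)ᶜ) ≃ ↥((K ∪ L)ᶜ) := Finset.equivOfCardEq c4
  have hcompl : ∀ (s t : Finset (Fin n)) (x : Fin n),
      x ∉ s ∩ t → x ∉ s \ t → x ∉ t \ s → x ∈ (s ∪ t)ᶜ := by
    intro s t x h1 h2 h3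
    simp only [Finset.mem_inter, Finset.mem_sdiff, Finset.mem_compl, Finset.mem_union,
      not_and, not_not] at *
    tauto
  let g : Fin n → Fin n := fun x =>
    if h : x ∈ I ∩ J then (e1 ⟨x, h⟩ : Fin n)
    else if h2 : x ∈ I \ J then (e2 ⟨x, h2⟩ : Fin n)
    else if h3 : x ∈ J \ I then (e3 ⟨x, h3⟩ : Fin n)
    else (e4 ⟨x, hcompl I J x h h2 h3⟩ : Fin n)
  let g' : Fin n → Fin n := fun x =>
    if h : x ∈ K ∩ L then (e1.symm ⟨x, h⟩ : Fin n)
    else if h2 : x ∈ K \ L then (e2.symm ⟨x, h2⟩ : Fin n)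
    else if h3 : x ∈ L \ K then (e3.symm ⟨x, h3⟩ : Fin n)
    else (e4.symm ⟨x, hcompl K L x h h2 h3⟩ : Fin n)
  have hgg : ∀ x, g' (g x) = x := by
    intro x
    by_cases h1 : x ∈ I ∩ J
    · have hv : (e1 ⟨x, h1⟩ : Fin n) ∈ K ∩ L := (e1 ⟨x, h1⟩).2
      simp only [g, g', dif_pos h1, dif_pos hv, Subtype.coe_eta, Equiv.symm_apply_apply]
    · by_cases h2 : x ∈ I \ J
      · have hv : (e2 ⟨x, h2⟩ : Fin n) ∈ K \ L := (e2 ⟨x, h2⟩).2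
        have hn1 : (e2 ⟨x, h2⟩ : Fin n) ∉ K ∩ L := by
          simp only [Finset.mem_sdiff] at hv
          simp only [Finset.mem_inter, not_and]
          intro _
          exact hv.2
        simp only [g, g', dif_neg h1, dif_pos h2, dif_neg hn1, dif_pos hv, Subtype.coe_eta,
          Equiv.symm_apply_apply]
      · by_cases h3 : x ∈ J \ I
        · have hv : (e3 ⟨x, h3⟩ : Fin n) ∈ L \ K := (e3 ⟨x, h3⟩).2
          have hvk : (e3 ⟨x, h3⟩ : Fin n) ∉ K := by
            simp only [Finset.mem_sdiff] at hv
            exact hv.2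
          have hn1 : (e3 ⟨x, h3⟩ : Fin n) ∉ K ∩ L := by
            simp only [Finset.mem_inter, not_and]
            intro hk
            exact absurd hk hvk
          have hn2 : (e3 ⟨x, h3⟩ : Fin n) ∉ K \ L := by
            simp only [Finset.mem_sdiff, not_and]
            intro hk
            exact absurd hk hvk
          simp only [g, g', dif_neg h1, dif_neg h2, dif_pos h3, dif_neg hn1, dif_neg hn2,
            dif_pos hv, Subtype.coe_eta, Equiv.symm_apply_apply]
        · have hv : (e4 ⟨x, hcompl I J x h1 h2 h3⟩ : Fin n) ∈ (K ∪ L)ᶜ :=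
            (e4 ⟨x, hcompl I J x h1 h2 h3⟩).2
          have hvk : (e4 ⟨x, hcompl I J x h1 h2 h3⟩ : Fin n) ∉ K ∧
              (e4 ⟨x, hcompl I J x h1 h2 h3⟩ : Fin n) ∉ L := by
            simp only [Finset.mem_compl, Finset.mem_union] at hv
            constructor <;> intro hc <;> exact hv (by tauto)
          have hn1 : (e4 ⟨x, hcompl I J x h1 h2 h3⟩ : Fin n) ∉ K ∩ L := by
            simp only [Finset.mem_inter, not_and]
            intro hk
            exact absurd hk hvk.1
          have hn2 : (e4 ⟨x, hcompl I J x h1 h2 h3⟩ : Fin n) ∉ K \ L := by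
            simp only [Finset.mem_sdiff, not_and]
            intro hk
            exact absurd hk hvk.1
          have hn3 : (e4 ⟨x, hcompl I J x h1 h2 h3⟩ : Fin n) ∉ L \ K := by
            simp only [Finset.mem_sdiff, not_and]
            intro hk
            exact absurd hk hvk.2
          simp only [g, g', dif_neg h1, dif_neg h2, dif_neg h3, dif_neg hn1, dif_neg hn2,
            dif_neg hn3, dif_pos hv, Subtype.coe_eta, Equiv.symm_apply_apply]
  have hinj : Function.Injective g := Function.LeftInverse.injective hgg
  have hbij : Function.Bijective g := Finite.injective_iff_bijective.mp hinj
  have himg : ∀ s t : Finset (Fin n), (∀ x ∈ s, g x ∈ t) → s.card = t.card →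
      s.image g = t := by
    intro s t hmem hcard
    apply Finset.eq_of_subset_of_card_le
    · intro y hy
      simp only [Finset.mem_image] at hy
      obtain ⟨x, hx, rfl⟩ := hy
      exact hmem x hx
    · rw [Finset.card_image_of_injective _ hinj, hcard]
  have hp1 : (I ∩ J).image g = K ∩ L := by
    apply himg _ _ _ hint
    intro x hx
    simp only [g, dif_pos hx]
    exact (e1 ⟨x, hx⟩).2
  have hp2 : (I \ J).image g = K \ L := by
    apply himg _ _ _ c2
    intro x hx
    have hnx : x ∉ I ∩ J := by
      simp only [Finset.mem_sdiff] at hx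
      simp only [Finset.mem_inter, not_and]
      intro _
      exact hx.2
    simp only [g, dif_neg hnx, dif_pos hx]
    exact (e2 ⟨x, hx⟩).2
  have hp3 : (J \ I).image g = L \ K := by
    apply himg _ _ _ c3
    intro x hx
    have hx' : x ∈ J ∧ x ∉ I := by
      simpa only [Finset.mem_sdiff] using hx
    have hnx : x ∉ I ∩ J := by
      simp only [Finset.mem_inter, not_and]
      intro hk
      exact absurd hk hx'.2
    have hnx2 : x ∉ I \ J := by
      simp only [Finset.mem_sdiff, not_and]
      intro hk
      exact absurd hk hx'.2
    simp only [g, dif_neg hnx, dif_neg hnx2, dif_pos hx]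
    exact (e3 ⟨x, hx⟩).2
  refine ⟨Equiv.ofBijective g hbij, ?_, ?_⟩
  · show I.image g = K
    calc I.image g = ((I \ J) ∪ (I ∩ J)).image g := by rw [Finset.sdiff_union_inter]
      _ = (I \ J).image g ∪ (I ∩ J).image g := Finset.image_union _ _
      _ = (K \ L) ∪ (K ∩ L) := by rw [hp2, hp1]
      _ = K := Finset.sdiff_union_inter K L
  · show J.image g = L
    calc J.image g = ((J \ I) ∪ (J ∩ I)).image g := by rw [Finset.sdiff_union_inter]
      _ = (J \ I).image g ∪ (J ∩ I).image g := Finset.image_union _ _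
      _ = (L \ K) ∪ (L ∩ K) := by
          rw [hp3, Finset.inter_comm J I, hp1, Finset.inter_comm K L]
      _ = L := Finset.sdiff_union_inter L K

end Aux


/-- If `2 ∈ R*`, `n ≥ 3m` and `H ≥ Λ^m E_n(R)`, then the sets
`A_{I,J} = {ξ : t_{I,J}(ξ) ∈ H}` coincide for pairs with equal intersection
cardinality `|I ∩ J| = |K ∩ L|`. -/
theorem levelSets_coincide (R : Type) [CommRing R] (h2 : IsUnit (2 : R)) (n m : ℕ)
    (hm1 : 1 ≤ m) (hnm : 3 * m ≤ n)
    (H : Subgroup (GL (ExtIdx n m) R)) (hH : extElem R n m ≤ H)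
    (I J K L : ExtIdx n m) (hIJ : I ≠ J) (hKL : K ≠ L)
    (hcard : (I.1 ∩ J.1).card = (K.1 ∩ L.1).card) :
    ∀ ξ : R, tGL R I J hIJ ξ ∈ H ↔ tGL R K L hKL ξ ∈ H := by
  
  intro ξ
  obtain ⟨σ, hσI, hσJ⟩ := exists_perm_of_cards I.1 J.1 K.1 L.1
    (by rw [I.2, K.2]) (by rw [J.2, L.2]) hcard
  have forward : ∀ (P Q P' Q' : ExtIdx n m) (hPQ : P ≠ Q) (hPQ' : P' ≠ Q')
      (τ : Equiv.Perm (Fin n)), P'.1 = P.1.image τ → Q'.1 = Q.1.image τ →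
      tGL R P Q hPQ ξ ∈ H → tGL R P' Q' hPQ' ξ ∈ H := by
    intro P Q P' Q' hPQ hPQ' τ hP' hQ' ht
    obtain ⟨M, hMel, d, hd, hMv⟩ := exists_mono (R := R) τ
    obtain ⟨c, hc, hconj⟩ := conj_tGL M τ d hd hMv P Q P' Q' hPQ hPQ' hP' hQ' ξ
    have hmem : (extPowHom M : GL (ExtIdx n m) R) ∈ H := hH (extPowHom_mem_extElem M hMel)
    have hin : tGL R P' Q' hPQ' (c * ξ) ∈ H := by
      rw [← hconj]
      exact H.mul_mem (H.mul_mem hmem ht) (H.inv_mem hmem)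
    rcases hc with rfl | rfl
    · rwa [one_mul] at hin
    · have hinv := H.inv_mem hin
      rw [tGL_inv_eq] at hinv
      have he : -(-1 * ξ) = ξ := by ring
      rwa [he] at hinv
  constructor
  · intro ht
    exact forward I J K L hIJ hKL σ hσI.symm hσJ.symm ht
  · intro ht
    have hIK : I.1 = K.1.image ⇑σ⁻¹ := by rw [← hσI, image_image_inv]
    have hJL : J.1 = L.1.image ⇑σ⁻¹ := by rw [← hσJ, image_image_inv]
    exact forward K L I J hKL hIJ σ⁻¹ hIK hJL ht
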